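/- arXiv:1810.01467 — 2 statements merged into one kernel-verified Lean document; each statement's English description precedes it below -/
import Mathlib

section
/- Let G = Ω₈⁺(2), realized as the commutator subgroup of the isometry group of the hyperbolic quadratic form of rank 8 over 𝔽₂. For every subgroup Q of G of cardinality 5, Q (viewed as a subgroup of its normalizer N_G(Q)) has a complement in N_G(Q); that is, N_G(Q) is a split extension N_G(Q) = Q ⋊ N̄ for some subgroup N̄. -/
abbrev V : Type := Fin 8 → ZMod 2

/-- The hyperbolic (plus-type) quadratic form of rank 8 over 𝔽₂. -/
def q (x : V) : ZMod 2 := x 0 * x 1 + x 2 * x 3 + x 4 * x 5 + x 6 * x 7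

/-- The orthogonal group O₈⁺(2): the subgroup of linear automorphisms of V preserving q. -/
def Oq : Subgroup (V ≃ₗ[ZMod 2] V) where
  carrier := {f | ∀ x, q (f x) = q x}
  one_mem' := fun _ => rfl
  mul_mem' := by
    intro f g hf hg x
    have h : (f * g) x = f (g x) := rfl
    rw [h, hf, hg]
  inv_mem' := by
    intro f hf x
    have h : f (f⁻¹ x) = x := f.apply_symm_apply x
    calc q (f⁻¹ x) = q (f (f⁻¹ x)) := (hf _).symm
    _ = q x := by rw [h]

/-- The simple group Ω₈⁺(2), the commutator subgroup of O₈⁺(2). -/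
abbrev Omega8 : Type := ↥(commutator ↥Oq)

open Polynomial

local notation "F2" => ZMod 2

lemma two_eq_zero : (2 : F2[X]) = 0 := by
  exact_mod_cast CharP.cast_eq_zero F2[X] 2

lemma fact_factor : ((X:F2[X])^5 - 1) * (X^20 + X^15 + X^10 + X^5 + 1) = X^25 - 1 := by
  ring

lemma coprime_phi : IsCoprime ((X:F2[X])^5 - 1) (X^20 + X^15 + X^10 + X^5 + 1) := by
  refine ⟨X^5 * (X^10 + 1), 1, ?_⟩
  linear_combination ((X:F2[X])^20 + (X:F2[X])^10) * two_eq_zero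

-- every irreducible divisor of X^25-1 of degree ≤ 8 divides X^5-1
lemma irr_dvd (r : F2[X]) (hirr : Irreducible r) (hdvd : r ∣ X^25 - 1)
    (hdeg : r.natDegree ≤ 8) : r ∣ X^5 - 1 := by
  haveI : Fact (Irreducible r) := ⟨hirr⟩
  set F := AdjoinRoot r
  have hrne : r ≠ 0 := hirr.ne_zero
  have hd1 : 1 ≤ r.natDegree := hirr.natDegree_pos
  let pb : PowerBasis F2 F := AdjoinRoot.powerBasis hrne
  haveI : Module.Finite F2 F := Module.Finite.of_basis pb.basis
  haveI : Finite F := Module.finite_of_finite F2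
  haveI : Fintype F := Fintype.ofFinite F
  have hcard : Fintype.card F = 2 ^ r.natDegree := by
    rw [Module.card_eq_pow_finrank (K := F2) (V := F), ZMod.card]
    congr 1
    rw [pb.finrank, AdjoinRoot.powerBasis_dim]
  set ζ : F := AdjoinRoot.root r
  have hz25 : ζ ^ 25 = 1 := by
    have h0 : (AdjoinRoot.mk r) (X^25 - 1) = 0 := AdjoinRoot.mk_eq_zero.mpr hdvd
    have h2 : ζ ^ 25 - 1 = 0 := by
      simpa [map_sub, map_pow] using h0
    linear_combination h2
  have hzne : ζ ≠ 0 := by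
    intro h
    rw [h] at hz25
    simp at hz25
  have h1 : orderOf ζ ∣ 25 := orderOf_dvd_of_pow_eq_one hz25
  have h2 : orderOf ζ ∣ 2 ^ r.natDegree - 1 := by
    apply orderOf_dvd_of_pow_eq_one
    rw [← hcard]
    exact FiniteField.pow_card_sub_one_eq_one ζ hzne
  have h5 : ζ ^ 5 = 1 := by
    apply orderOf_dvd_iff_pow_eq_one.mp
    have hgcd : orderOf ζ ∣ Nat.gcd 25 (2 ^ r.natDegree - 1) := Nat.dvd_gcd h1 h2
    have hg5 : Nat.gcd 25 (2 ^ r.natDegree - 1) ∣ 5 := by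
      interval_cases h : r.natDegree <;> decide
    exact hgcd.trans hg5
  rw [← AdjoinRoot.mk_eq_zero (f := r)]
  have hmk : (AdjoinRoot.mk r) (X^5 - 1) = ζ ^ 5 - 1 := by simp [map_sub, map_pow]; rfl
  rw [hmk, h5, sub_self]

lemma small_dvd (m : F2[X]) (hm0 : m ≠ 0) (hdvd : m ∣ X^25 - 1) (hdeg : m.natDegree ≤ 8) :
    m ∣ X^5 - 1 := by
  set Φ : F2[X] := X^20 + X^15 + X^10 + X^5 + 1 with hΦ
  have hΦdvd : Φ ∣ X^25 - 1 := ⟨X^5 - 1, by rw [mul_comm]; exact fact_factor.symm⟩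
  have hco : IsCoprime m Φ := by
    apply EuclideanDomain.isCoprime_of_dvd
    · exact fun h => hm0 h.1
    · intro z hznu hz0 hzm hzΦ
      obtain ⟨r, hrirr, hrz⟩ := WfDvdMonoid.exists_irreducible_factor hznu hz0
      have hrm : r ∣ m := hrz.trans hzm
      have hrΦ : r ∣ Φ := hrz.trans hzΦ
      have hr8 : r.natDegree ≤ 8 := (natDegree_le_of_dvd hrm hm0).trans hdeg
      have hr5 : r ∣ X^5 - 1 := irr_dvd r hrirr (hrΦ.trans hΦdvd) hr8
      exact hrirr.not_isUnit (coprime_phi.isUnit_of_dvd' hr5 hrΦ)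
  have hmul : m ∣ (X^5 - 1) * Φ := by rw [fact_factor]; exact hdvd
  exact hco.dvd_of_dvd_mul_right hmul

instance : Finite (V ≃ₗ[F2] V) :=
  Finite.of_injective (fun f => (f : V → V)) DFunLike.coe_injective

lemma end_pow (f : Module.End F2 V) (h : f ^ 25 = 1) : f ^ 5 = 1 := by
  set m := minpoly F2 f with hm
  have hint : IsIntegral F2 f := LinearMap.isIntegral f
  have hm0 : m ≠ 0 := minpoly.ne_zero hint
  have hdvd : m ∣ X ^ 25 - 1 := by
    apply minpoly.dvd
    simp [map_sub, map_pow, aeval_X, h]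
  have hdeg : m.natDegree ≤ 8 := by
    have h1 : m ∣ f.charpoly := minpoly.dvd _ _ f.aeval_self_charpoly
    have h2 := natDegree_le_of_dvd h1 f.charpoly_monic.ne_zero
    rwa [f.charpoly_natDegree, Module.finrank_fintype_fun_eq_card, Fintype.card_fin] at h2
  have h5 : m ∣ X ^ 5 - 1 := small_dvd m hm0 hdvd hdeg
  obtain ⟨c, hc⟩ := h5
  have : aeval f (X ^ 5 - 1 : F2[X]) = 0 := by
    rw [hc, map_mul, minpoly.aeval, zero_mul]
  simpa [map_sub, map_pow, aeval_X, sub_eq_zero] using this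

lemma gl_pow (g : V ≃ₗ[F2] V) (h : g ^ 25 = 1) : g ^ 5 = 1 := by
  let e := (LinearMap.GeneralLinearGroup.generalLinearEquiv F2 V).symm
  set u : LinearMap.GeneralLinearGroup F2 V := e g with hu
  have hu25 : u ^ 25 = 1 := by rw [hu, ← map_pow, h, map_one]
  have hc : ((u : Module.End F2 V)) ^ 25 = 1 := by
    rw [← Units.val_pow_eq_pow_val, hu25, Units.val_one]
  have hc5 : ((u : Module.End F2 V)) ^ 5 = 1 := end_pow _ hc
  have hu5 : u ^ 5 = 1 := by
    ext1
    rw [Units.val_pow_eq_pow_val, hc5, Units.val_one]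
  have := congrArg e.symm (congrArg (· ^ 5) hu.symm)
  calc g ^ 5 = e.symm (e (g ^ 5)) := by rw [MulEquiv.symm_apply_apply]
  _ = e.symm (u ^ 5) := by rw [map_pow]
  _ = 1 := by rw [hu5, map_one]

lemma card_lin : Nat.card (V ≃ₗ[F2] V) = ∏ i : Fin 8, (2 ^ 8 - 2 ^ (i : ℕ)) := by
  have e : GL (Fin 8) F2 ≃* (V ≃ₗ[F2] V) :=
    (Matrix.GeneralLinearGroup.toLin).trans (LinearMap.GeneralLinearGroup.generalLinearEquiv F2 V)
  rw [← Nat.card_congr e.toEquiv, Matrix.card_GL_field, ZMod.card]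

lemma not_dvd_card_lin : ¬ (5 ^ 3 ∣ Nat.card (V ≃ₗ[F2] V)) := by
  rw [card_lin]
  decide

open Subgroup

variable {G : Type*} [Group G] [Finite G] {p : ℕ} [hp : Fact p.Prime]

-- commutativity transported along injective hom
lemma comm_of_inj {H K : Type*} [Group H] [Group K] (f : H →* K) (hf : Function.Injective f)
    (h : ∀ x y : K, x * y = y * x) : ∀ x y : H, x * y = y * x := by
  intro x y
  apply hf
  rw [map_mul, map_mul, h]

lemma conj_pow_nat {G : Type*} [Group G] (g h : G) (k : ℕ) :
    (g * h * g⁻¹) ^ k = g * h ^ k * g⁻¹ := by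
  induction k with
  | zero => simp
  | succ n ih => rw [pow_succ, pow_succ, ih]; group

lemma subgroup_eq_of_le_of_card_le {G : Type*} [Group G] [Finite G] {H K : Subgroup G}
    (h : H ≤ K) (hc : Nat.card ↥K ≤ Nat.card ↥H) : H = K := by
  apply SetLike.ext'
  refine Set.eq_of_subset_of_ncard_le h ?_ (Set.toFinite _)
  rw [← Nat.card_coe_set_eq, ← Nat.card_coe_set_eq]
  exact hc

set_option maxHeartbeats 1000000 in
theorem key_lemma (A : Subgroup G) [hAn : A.Normal] (hA : Nat.card A = p)
    (hexp : ∀ g : G, g ^ (p ^ 2) = 1 → g ^ p = 1)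
    (hcard : ¬ (p ^ 3 ∣ Nat.card G)) :
    ∃ S : Subgroup G, IsComplement' A S := by
  classical
  haveI : IsCyclic ↥A := isCyclic_of_prime_card hA
  haveI hAcomm : IsMulCommutative ↥A := ⟨⟨IsCyclic.commGroup.mul_comm⟩⟩
  set C := Subgroup.centralizer (A : Set G) with hCdef
  have hAC : A ≤ C := Subgroup.le_centralizer A
  haveI hCn : C.Normal := by
    constructor
    intro c hc g
    rw [hCdef, mem_centralizer_iff]
    intro a ha
    have ha' : g⁻¹ * a * g ∈ A := by
      have := hAn.conj_mem a ha g⁻¹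
      simpa using this
    have hc' := (mem_centralizer_iff.mp hc) _ ha'
    -- hc' : (g⁻¹ * a * g) * c = c * (g⁻¹ * a * g)
    have : a * (g * c * g⁻¹) = g * ((g⁻¹ * a * g) * c) * g⁻¹ := by group
    rw [this, hc']
    group
  -- Sylow subgroup of G containing A
  have hApg : IsPGroup p ↥A := IsPGroup.of_card (by rw [hA, pow_one])
  obtain ⟨P, hAP⟩ := hApg.exists_le_sylow
  obtain ⟨n, hn⟩ := (IsPGroup.iff_card).mp P.2
  have hn1 : 1 ≤ n := by
    rcases Nat.eq_zero_or_pos n with h0 | h; swap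
    · exact h
    exfalso
    have hd : Nat.card ↥A ∣ Nat.card ↥(P : Subgroup G) := card_dvd_of_le hAP
    rw [hA, hn, h0, pow_zero, Nat.dvd_one] at hd
    exact hp.out.ne_one hd
  have hn2 : n ≤ 2 := by
    by_contra hgt
    push_neg at hgt
    apply hcard
    have h1 : p ^ 3 ∣ p ^ n := pow_dvd_pow p hgt
    exact h1.trans (hn ▸ card_subgroup_dvd_card (P : Subgroup G))
  -- P is commutative
  have hPcomm : ∀ x y : ↥(P : Subgroup G), x * y = y * x := by
    interval_cases n
    · haveI : IsCyclic ↥(P : Subgroup G) := isCyclic_of_prime_card (p := p) (by rw [hn, pow_one])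
      letI := IsCyclic.commGroup (α := ↥(P : Subgroup G))
      exact fun x y => mul_comm x y
    · exact IsPGroup.commutative_of_card_eq_prime_sq hn
  have hPC : (P : Subgroup G) ≤ C := by
    intro x hx
    rw [hCdef, mem_centralizer_iff]
    intro a ha
    have := hPcomm ⟨a, hAP ha⟩ ⟨x, hx⟩
    exact congrArg Subtype.val this
  -- work inside C
  letI : CommGroup ↥A := IsCyclic.commGroup
  let P' : Sylow p ↥C := P.subtype hPC
  have hP'coe : (P' : Subgroup ↥C) = (P : Subgroup G).subgroupOf C := rfl
  set Z : Subgroup ↥C := A.subgroupOf C with hZdef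
  have hZcard : Nat.card ↥Z = p := by
    rw [← hA]; exact Nat.card_congr (subgroupOfEquivOfLe hAC).toEquiv
  have hZcenter : Z ≤ center ↥C := by
    intro z hz
    rw [Subgroup.mem_center_iff]
    intro c
    have h1 := (mem_centralizer_iff.mp c.2) _ (mem_subgroupOf.mp hz)
    exact Subtype.ext h1.symm
  have hZP' : Z ≤ (P' : Subgroup ↥C) := by
    rw [hP'coe]
    intro x hx
    exact mem_subgroupOf.mpr (hAP (mem_subgroupOf.mp hx))
  have hP'card : Nat.card ↥(P' : Subgroup ↥C) = p ^ n := by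
    rw [hP'coe, ← hn]
    exact Nat.card_congr (subgroupOfEquivOfLe hPC).toEquiv
  have hexpP' : ∀ x : ↥(P' : Subgroup ↥C), x ^ p = 1 := by
    intro x
    have hdvd : orderOf x ∣ p ^ 2 :=
      (orderOf_dvd_natCard x).trans (by rw [hP'card]; exact pow_dvd_pow p hn2)
    have h2 : x ^ (p ^ 2) = 1 := orderOf_dvd_iff_pow_eq_one.mp hdvd
    have h2' : (((x : ↥C) : G)) ^ (p ^ 2) = 1 := by
      have h3 := congrArg (fun y : ↥(P' : Subgroup ↥C) => ((y : ↥C) : G)) h2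
      simpa using h3
    have h5 := hexp _ h2'
    refine Subtype.ext (Subtype.ext ?_)
    simpa using h5
  -- construct the retraction ϕ
  have hincl : ∀ z : ↥Z, ((Subgroup.inclusion hZP' z : ↥C) : G) = ((z : ↥C) : G) := fun z => rfl
  obtain ⟨ϕ, hϕ⟩ : ∃ ϕ : ↥(P' : Subgroup ↥C) →* ↥A,
      ∀ z : ↥Z, ϕ (Subgroup.inclusion hZP' z) = (subgroupOfEquivOfLe hAC) z := by
    interval_cases n
    · -- P' = Z
      have hbij : Function.Bijective (Subgroup.inclusion hZP') := by
        rw [Nat.bijective_iff_injective_and_card]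
        exact ⟨Subgroup.inclusion_injective hZP', by rw [hZcard, hP'card, pow_one]⟩
      let e := MulEquiv.ofBijective _ hbij
      refine ⟨(subgroupOfEquivOfLe hAC).toMonoidHom.comp e.symm.toMonoidHom, fun z => ?_⟩
      have : e.symm (Subgroup.inclusion hZP' z) = z := by
        apply hbij.injective
        have := e.apply_symm_apply (Subgroup.inclusion hZP' z)
        exact this
      simp only [MonoidHom.comp_apply, MulEquiv.coe_toMonoidHom]
      rw [this]
    · -- card P' = p ^ 2
      have hcards : Nat.card ↥(P' : Subgroup ↥C) = p ^ 2 := hP'card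
      have hZP'card : Nat.card ↥(Z.subgroupOf (P' : Subgroup ↥C)) = p :=
        (Nat.card_congr (subgroupOfEquivOfLe hZP').toEquiv).trans hZcard
      obtain ⟨x, hx⟩ : ∃ x : ↥(P' : Subgroup ↥C), x ∉ Z.subgroupOf (P' : Subgroup ↥C) := by
        by_contra hall
        push_neg at hall
        have htop : Z.subgroupOf (P' : Subgroup ↥C) = ⊤ := (Subgroup.eq_top_iff' _).mpr hall
        have hcc := congrArg (fun (H : Subgroup ↥(P' : Subgroup ↥C)) => Nat.card ↥H) htop
        rw [hZP'card] at hcc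
        have htopc : Nat.card ↥(⊤ : Subgroup ↥(P' : Subgroup ↥C)) = p ^ 2 := by
          rw [← hcards]
          exact Nat.card_congr Subgroup.topEquiv.toEquiv
        rw [htopc] at hcc
        nlinarith [hp.out.two_le]
      have hx1 : x ≠ 1 := fun h => hx (h ▸ (Z.subgroupOf (P' : Subgroup ↥C)).one_mem)
      have hordx : orderOf x = p := orderOf_eq_prime (hexpP' x) hx1
      set K : Subgroup ↥(P' : Subgroup ↥C) := Subgroup.zpowers x with hKdef
      have hKcard : Nat.card ↥K = p := (Nat.card_zpowers x).trans hordx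
      letI : CommGroup ↥(P' : Subgroup ↥C) :=
        IsPGroup.commGroupOfCardEqPrimeSq hcards
      -- the quotient map
      have hcardQ : Nat.card (↥(P' : Subgroup ↥C) ⧸ K) = p := by
        have h1 := card_eq_card_quotient_mul_card_subgroup K
        rw [hcards, hKcard] at h1
        have hpne : p ≠ 0 := hp.out.ne_zero
        have : p * Nat.card (↥(P' : Subgroup ↥C) ⧸ K) = p * p := by
          rw [mul_comm] at h1; nlinarith [h1]
        exact Nat.eq_of_mul_eq_mul_left hp.out.pos this
      let f : ↥Z →* ↥(P' : Subgroup ↥C) ⧸ K :=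
        (QuotientGroup.mk' K).comp (Subgroup.inclusion hZP')
      have hfinj : Function.Injective f := by
        rw [← MonoidHom.ker_eq_bot_iff]
        rw [eq_bot_iff]
        intro z hz
        have hzK : Subgroup.inclusion hZP' z ∈ K := by
          rwa [MonoidHom.mem_ker, MonoidHom.comp_apply, ← MonoidHom.mem_ker,
            QuotientGroup.ker_mk'] at hz
        by_cases hz1 : Subgroup.inclusion hZP' z = 1
        · have hzz : z = 1 := Subgroup.inclusion_injective hZP' (by simpa using hz1)
          simp [hzz]
        · exfalso
          set w := Subgroup.inclusion hZP' z with hwdef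
          have hordw : orderOf w = p := orderOf_eq_prime (hexpP' w) hz1
          have hZWle : Subgroup.zpowers w ≤ K := (Subgroup.zpowers_le).mpr hzK
          have hZW : Subgroup.zpowers w = K := by
            apply subgroup_eq_of_le_of_card_le hZWle
            rw [hKcard, (Nat.card_zpowers w).trans hordw]
          have hxZW : x ∈ Subgroup.zpowers w := by rw [hZW]; exact Subgroup.mem_zpowers x
          obtain ⟨j, hj⟩ := hxZW
          apply hx
          have hwZ : w ∈ Z.subgroupOf (P' : Subgroup ↥C) := by
            rw [mem_subgroupOf]
            exact z.2
          rw [← hj]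
          exact Subgroup.zpow_mem _ hwZ j
      have hbijf : Function.Bijective f := by
        rw [Nat.bijective_iff_injective_and_card]
        exact ⟨hfinj, by rw [hZcard, hcardQ]⟩
      let e := MulEquiv.ofBijective f hbijf
      refine ⟨(subgroupOfEquivOfLe hAC).toMonoidHom.comp
        (e.symm.toMonoidHom.comp (QuotientGroup.mk' K)), fun z => ?_⟩
      have he : e.symm ((QuotientGroup.mk' K) (Subgroup.inclusion hZP' z)) = z := by
        apply hbijf.injective
        have h1 := e.apply_symm_apply ((QuotientGroup.mk' K) (Subgroup.inclusion hZP' z))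
        exact h1
      simp only [MonoidHom.comp_apply, MulEquiv.coe_toMonoidHom]
      rw [he]
  -- the transfer homomorphism
  haveI : FiniteIndex (P' : Subgroup ↥C) := ⟨index_ne_zero_of_finite⟩
  set τ : ↥C →* ↥A := MonoidHom.transfer ϕ with hτdef
  set e' : ℕ := (P' : Subgroup ↥C).index with he'def
  have he'p : ¬ p ∣ e' := Sylow.not_dvd_index' P' index_ne_zero_of_finite
  have hτ : ∀ (a : G) (ha : a ∈ A), τ ⟨a, hAC ha⟩ = (⟨a, ha⟩ : ↥A) ^ e' := by
    intro a ha
    have hkey : ∀ (k : ℕ) (g₀ : ↥C), g₀⁻¹ * (⟨a, hAC ha⟩ : ↥C) ^ k * g₀ ∈ (P' : Subgroup ↥C) →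
        g₀⁻¹ * (⟨a, hAC ha⟩ : ↥C) ^ k * g₀ = (⟨a, hAC ha⟩ : ↥C) ^ k := by
      intro k g₀ _
      have hzmem : (⟨a, hAC ha⟩ : ↥C) ^ k ∈ Z := Z.pow_mem (mem_subgroupOf.mpr ha) k
      have hcen := Subgroup.mem_center_iff.mp (hZcenter hzmem) g₀
      rw [mul_assoc, ← hcen, ← mul_assoc, inv_mul_cancel, one_mul]
    have h1 := MonoidHom.transfer_eq_pow ϕ (⟨a, hAC ha⟩ : ↥C) hkey
    have h2 : (⟨(⟨a, hAC ha⟩ : ↥C) ^ (P' : Subgroup ↥C).index,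
        MonoidHom.transfer_eq_pow_aux _ hkey⟩ : ↥(P' : Subgroup ↥C))
        = Subgroup.inclusion hZP'
            ⟨(⟨a, hAC ha⟩ : ↥C) ^ e', Z.pow_mem (mem_subgroupOf.mpr ha) e'⟩ :=
      Subtype.ext rfl
    rw [hτdef, h1, h2, hϕ]
    apply Subtype.ext
    simp [SubgroupClass.coe_pow]
  -- the averaged homomorphism
  haveI : Fintype (G ⧸ C) := Fintype.ofFinite _
  set ψc : G → (↥C →* ↥A) := fun g =>
    ((MulAut.conjNormal g).toMonoidHom.comp τ).comp
      ((MulAut.conjNormal g⁻¹).toMonoidHom) with hψcdef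
  have hψc_apply : ∀ (g : G) (c : ↥C),
      ψc g c = (MulAut.conjNormal g) (τ ((MulAut.conjNormal g⁻¹) c)) := fun g c => rfl
  have hconjhelp : ∀ u v : ↥A, u⁻¹ * v * u = v := fun u v => by
    rw [mul_comm (u⁻¹ * v) u, ← mul_assoc, mul_inv_cancel, one_mul]
  have hψc_mul : ∀ (g : G) (c0 : ↥C), ψc (g * (c0 : G)) = ψc g := by
    intro g c0
    refine MonoidHom.ext fun y => ?_
    rw [hψc_apply, hψc_apply]
    have hinner : τ ((MulAut.conjNormal ((g * (c0 : G))⁻¹)) y)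
        = (τ c0)⁻¹ * τ ((MulAut.conjNormal g⁻¹) y) * τ c0 := by
      have harg : (MulAut.conjNormal ((g * (c0 : G))⁻¹)) y
          = c0⁻¹ * ((MulAut.conjNormal g⁻¹) y) * c0 := by
        apply Subtype.ext
        simp only [MulAut.conjNormal_apply, Subgroup.coe_mul, InvMemClass.coe_inv]
        group
      rw [harg, map_mul, map_mul, map_inv]
    rw [hinner, hconjhelp]
    apply Subtype.ext
    simp only [MulAut.conjNormal_apply]
    set v : G := ↑(τ ((MulAut.conjNormal g⁻¹) y)) with hv
    have hvA : v ∈ A := (τ ((MulAut.conjNormal g⁻¹) y)).2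
    have hvc : (c0 : G) * v * (c0 : G)⁻¹ = v := by
      have := (mem_centralizer_iff.mp c0.2) v hvA
      rw [← this]
      group
    calc (g * c0) * v * (g * c0)⁻¹ = g * ((c0 : G) * v * (c0 : G)⁻¹) * g⁻¹ := by group
    _ = g * v * g⁻¹ := by rw [hvc]
  set Φq : G ⧸ C → (↥C →* ↥A) := Quotient.lift ψc (by
    intro a b hab
    have h := QuotientGroup.leftRel_apply.mp hab
    have hb : b = a * ((⟨a⁻¹ * b, h⟩ : ↥C) : G) := by group
    rw [hb, hψc_mul]) with hΦqdef
  have hΦq_mk : ∀ g : G, Φq (g : G ⧸ C) = ψc g := fun g => rfl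
  set Ψ : ↥C →* ↥A := ∏ x : G ⧸ C, Φq x with hΨdef
  have hΨapply : ∀ c : ↥C, Ψ c = ∏ x : G ⧸ C, Φq x c := fun c => by
    rw [hΨdef]
    exact MonoidHom.finset_prod_apply _ _ _
  set E : ℕ := e' * C.index with hEdef
  -- value on A
  have hΨA : ∀ (a : G) (ha : a ∈ A), Ψ ⟨a, hAC ha⟩ = (⟨a, ha⟩ : ↥A) ^ E := by
    intro a ha
    rw [hΨapply]
    have hx : ∀ x : G ⧸ C, Φq x ⟨a, hAC ha⟩ = (⟨a, ha⟩ : ↥A) ^ e' := by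
      intro x
      induction x using QuotientGroup.induction_on with
      | H g =>
        rw [hΦq_mk, hψc_apply]
        have hga : g⁻¹ * a * g ∈ A := by simpa using hAn.conj_mem a ha g⁻¹
        have hconjC : (MulAut.conjNormal g⁻¹) (⟨a, hAC ha⟩ : ↥C)
            = ⟨g⁻¹ * a * g, hAC hga⟩ := by
          apply Subtype.ext
          simp [MulAut.conjNormal_apply]
        rw [hconjC, hτ _ hga]
        apply Subtype.ext
        simp only [MulAut.conjNormal_apply, SubgroupClass.coe_pow]
        have hcp : (g⁻¹ * a * g) ^ e' = g⁻¹ * a ^ e' * g := by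
          have h9 := conj_pow_nat g⁻¹ a e'
          rwa [inv_inv] at h9
        rw [hcp]
        group
    rw [Finset.prod_congr rfl (fun x _ => hx x), Finset.prod_const, Finset.card_univ, ← pow_mul,
      hEdef]
    congr 1
    rw [index_eq_card, Nat.card_eq_fintype_card]
  -- equivariance
  have hΨconj : ∀ (m : G) (c : ↥C),
      Ψ ((MulAut.conjNormal m) c) = (MulAut.conjNormal m) (Ψ c) := by
    intro m c
    have hpoint : ∀ x : G ⧸ C, Φq x ((MulAut.conjNormal m) c)
        = (MulAut.conjNormal m) (Φq (((m⁻¹ : G) : G ⧸ C) * x) c) := by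
      intro x
      induction x using QuotientGroup.induction_on with
      | H n =>
        have hmn : ((m⁻¹ : G) : G ⧸ C) * ((n : G) : G ⧸ C) = ((m⁻¹ * n : G) : G ⧸ C) := rfl
        rw [hmn, hΦq_mk, hΦq_mk, hψc_apply, hψc_apply]
        have harg : (MulAut.conjNormal n⁻¹) ((MulAut.conjNormal m) c)
            = (MulAut.conjNormal ((m⁻¹ * n)⁻¹)) c := by
          rw [← MulAut.mul_apply, ← map_mul]
          congr 1
          group
        rw [harg]
        apply Subtype.ext
        simp only [MulAut.conjNormal_apply]
        group
    rw [hΨapply, hΨapply]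
    rw [Finset.prod_congr rfl (fun x _ => hpoint x)]
    rw [← map_prod]
    congr 1
    exact Equiv.prod_comp (Equiv.mulLeft ((m⁻¹ : G) : G ⧸ C)) (fun y => Φq y c)
  -- properties of E
  have hpE : ¬ p ∣ E := by
    rw [hEdef]
    intro hdvd
    rcases (Nat.Prime.dvd_mul hp.out).mp hdvd with h | h
    · exact he'p h
    · have hCP : C.index ∣ (P : Subgroup G).index := index_dvd_of_le hPC
      have : ¬ p ∣ (P : Subgroup G).index := Sylow.not_dvd_index' P index_ne_zero_of_finite
      exact this (h.trans hCP)
  -- the kernel D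
  set D : Subgroup G := Ψ.ker.map C.subtype with hDdef
  haveI hDn : D.Normal := by
    constructor
    intro d hd m
    rw [hDdef] at hd ⊢
    obtain ⟨k, hk, hkd⟩ := Subgroup.mem_map.mp hd
    apply Subgroup.mem_map.mpr
    refine ⟨(MulAut.conjNormal m) k, ?_, ?_⟩
    · rw [MonoidHom.mem_ker, hΨconj, MonoidHom.mem_ker.mp hk, map_one]
    · simp only [MulAut.conjNormal_apply, Subgroup.coe_subtype]
      rw [show (C.subtype k : G) = ↑k from rfl] at hkd
      rw [hkd]
  have hDC : D ≤ C := by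
    rw [hDdef]
    rintro d ⟨k, _, rfl⟩
    exact k.2
  have hAD : ∀ a : G, a ∈ A → a ∈ D → a = 1 := by
    intro a ha haD
    rw [hDdef] at haD
    obtain ⟨k, hk, hkd⟩ := Subgroup.mem_map.mp haD
    have hk2 : k = ⟨a, hAC ha⟩ := Subtype.ext hkd
    rw [hk2] at hk
    have h1 : (⟨a, ha⟩ : ↥A) ^ E = 1 := by
      rw [← hΨA a ha]
      exact MonoidHom.mem_ker.mp hk
    have hord : orderOf (⟨a, ha⟩ : ↥A) ∣ E := orderOf_dvd_of_pow_eq_one h1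
    have hordp : orderOf (⟨a, ha⟩ : ↥A) ∣ p := hA ▸ orderOf_dvd_natCard _
    have : orderOf (⟨a, ha⟩ : ↥A) = 1 := by
      by_contra hne
      have := (Nat.Prime.eq_one_or_self_of_dvd hp.out _ hordp).resolve_left hne
      rw [this] at hord
      exact hpE hord
    have := orderOf_eq_one_iff.mp this
    exact congrArg Subtype.val this
  -- Ψ is surjective
  have hΨsurj : Function.Surjective Ψ := by
    intro b
    have hcop : (Nat.card ↥A).Coprime E := by
      rw [hA]
      exact (Nat.Prime.coprime_iff_not_dvd hp.out).mpr hpE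
    obtain ⟨a, hae⟩ := (powCoprime hcop).surjective b
    exact ⟨⟨(a : G), hAC a.2⟩, by rw [hΨA _ a.2]; exact hae⟩
  -- card computations
  have hCcard : Nat.card ↥C = p * Nat.card ↥D := by
    have h1 := card_eq_card_quotient_mul_card_subgroup (Ψ.ker)
    have h2 : Nat.card (↥C ⧸ Ψ.ker) = p := by
      rw [← hA]
      exact Nat.card_congr (QuotientGroup.quotientKerEquivOfSurjective Ψ hΨsurj).toEquiv
    have h3 : Nat.card ↥Ψ.ker = Nat.card ↥D :=
      Nat.card_congr (Subgroup.equivMapOfInjective _ _ (subtype_injective C)).toEquiv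
    rw [h1, h2, h3]
  -- pass to the quotient by D
  set π : G →* G ⧸ D := QuotientGroup.mk' D with hπdef
  have hπsurj : Function.Surjective π := QuotientGroup.mk'_surjective D
  set Abar : Subgroup (G ⧸ D) := A.map π with hAbardef
  haveI : Abar.Normal := Subgroup.Normal.map hAn π hπsurj
  have hresinj : Function.Injective (π.domRestrict A) := by
    intro a b hab
    have h1 : π ((a : G) * (b : G)⁻¹) = 1 := by
      rw [map_mul, map_inv]
      rw [MonoidHom.restrict_apply, MonoidHom.restrict_apply] at hab
      rw [hab, mul_inv_cancel]
    have h2 : (a : G) * (b : G)⁻¹ ∈ D := (QuotientGroup.eq_one_iff _).mp h1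
    have h3 : (a : G) * (b : G)⁻¹ ∈ A := A.mul_mem a.2 (A.inv_mem b.2)
    have h5 := hAD _ h3 h2
    exact Subtype.ext (mul_inv_eq_one.mp h5)
  have hAbarcard : Nat.card ↥Abar = p := by
    have hrange : (π.domRestrict A).range = Abar := by
      rw [hAbardef]
      ext x
      simp [MonoidHom.mem_range, MonoidHom.restrict_apply, Subgroup.mem_map]
    have := Nat.card_congr (MonoidHom.ofInjective hresinj).toEquiv
    rw [← hA, this, hrange]
  have hGbar : Nat.card (G ⧸ D) = p * C.index := by
    have h1 := card_eq_card_quotient_mul_card_subgroup D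
    have h2 := card_mul_index C
    rw [hCcard] at h2
    -- card G = card (G/D) * card D and card G = p * card D * C.index
    have hDpos : 0 < Nat.card ↥D := Nat.card_pos
    have : Nat.card (G ⧸ D) * Nat.card ↥D = p * C.index * Nat.card ↥D := by
      rw [← h1, ← h2]
      ring
    exact Nat.eq_of_mul_eq_mul_right hDpos this
  have hAbarindex : Abar.index = C.index := by
    have h1 := card_mul_index Abar
    rw [hAbarcard, hGbar] at h1
    exact Nat.eq_of_mul_eq_mul_left hp.out.pos h1
  have hcop : (Nat.card ↥Abar).Coprime Abar.index := by
    rw [hAbarcard, hAbarindex]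
    apply (Nat.Prime.coprime_iff_not_dvd hp.out).mpr
    intro h
    apply hpE
    rw [hEdef]
    exact Dvd.dvd.mul_left h e'
  obtain ⟨Hbar, hHbar⟩ := Subgroup.exists_right_complement'_of_coprime hcop
  set S : Subgroup G := Hbar.comap π with hSdef
  refine ⟨S, isComplement'_of_card_mul_and_disjoint ?_ ?_⟩
  · -- cardinality
    have hSindex : S.index = p := by
      rw [hSdef, index_comap_of_surjective _ hπsurj, hHbar.index_eq_card]
      exact hAbarcard
    calc Nat.card ↥A * Nat.card ↥S = Nat.card ↥S * S.index := by rw [hA, hSindex, mul_comm]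
    _ = Nat.card G := card_mul_index S
  · -- disjoint
    rw [disjoint_iff]
    rw [eq_bot_iff]
    intro a ⟨haA, haS⟩
    have h1 : π a ∈ Abar := Subgroup.mem_map_of_mem π haA
    have h2 : π a ∈ Hbar := haS
    have h3 : π a = 1 := by
      have := hHbar.disjoint
      rw [disjoint_iff] at this
      have : π a ∈ (⊥ : Subgroup (G ⧸ D)) := this ▸ Subgroup.mem_inf.mpr ⟨h1, h2⟩
      simpa using this
    have h4 : a ∈ D := (QuotientGroup.eq_one_iff _).mp h3
    have := hAD a haA h4
    simp [this]

instance inst_s10 : Fact (Nat.Prime 5) := ⟨by norm_num⟩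

/-- For every subgroup Q of Ω₈⁺(2) of order 5, Q has a complement in its normalizer
N_G(Q); that is, N_G(Q) = Q ⋊ N̄ for some subgroup N̄. -/
theorem order_five_split_in_normalizer (Q : Subgroup Omega8) (hQ : Nat.card ↥Q = 5) :
    ∃ S : Subgroup ↥(Subgroup.normalizer (Q : Set Omega8)),
      Subgroup.IsComplement' (Q.subgroupOf (Subgroup.normalizer (Q : Set Omega8))) S := by
  set N := Subgroup.normalizer (Q : Set Omega8) with hNdef
  let j : ↥N →* (V ≃ₗ[ZMod 2] V) :=
    Oq.subtype.comp (((commutator ↥Oq).subtype).comp N.subtype)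
  have hjinj : Function.Injective j :=
    (Subgroup.subtype_injective _).comp
      ((Subgroup.subtype_injective _).comp (Subgroup.subtype_injective _))
  haveI : (Q.subgroupOf N).Normal := Subgroup.normal_in_normalizer
  have hcardA : Nat.card ↥(Q.subgroupOf N) = 5 :=
    (Nat.card_congr (Subgroup.subgroupOfEquivOfLe Subgroup.le_normalizer).toEquiv).trans hQ
  apply key_lemma (p := 5) (Q.subgroupOf N) hcardA
  · intro g hg
    have hg' : g ^ 25 = 1 := by norm_num at hg; exact hg
    have h1 : (j g) ^ 25 = 1 := by rw [← map_pow, hg', map_one]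
    have h2 := gl_pow (j g) h1
    apply hjinj
    rw [map_pow, h2, map_one]
  · intro hdvd
    apply not_dvd_card_lin
    refine dvd_trans hdvd ?_
    have h1 : Nat.card ↥N = Nat.card ↥j.range :=
      Nat.card_congr (MonoidHom.ofInjective hjinj).toEquiv
    rw [h1]
    exact Subgroup.card_subgroup_dvd_card j.range
end

section
/- Let k = 𝔽₅ and let D₁₀ = DihedralGroup 5 be the dihedral group of order 10. Then the group algebra k[D₁₀] has exactly two isomorphism classes of simple modules, and both simple modules have k-dimension 1. -/
instance : Fact (Nat.Prime 5) := ⟨by norm_num⟩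

namespace D10Aux

open MonoidAlgebra DihedralGroup

abbrev kk : Type := ZMod 5
abbrev G : Type := DihedralGroup 5
abbrev A : Type := MonoidAlgebra kk G

def chi (ε : kk) (hε : ε * ε = 1) : G →* kk where
  toFun g := match g with | .r _ => 1 | .sr _ => ε
  map_one' := rfl
  map_mul' := by
    rintro (i | i) (j | j) <;>
      simp only [r_mul_r, r_mul_sr, sr_mul_r, sr_mul_sr] <;>
      simp [hε]

noncomputable def phi (ε : kk) (hε : ε * ε = 1) : A →ₐ[kk] kk :=
  MonoidAlgebra.lift kk kk G (chi ε hε)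

abbrev M (ε : kk) (hε : ε * ε = 1) : Type := kk

noncomputable instance modM (ε : kk) (hε : ε * ε = 1) : Module A (M ε hε) :=
  Module.compHom (M ε hε) (phi ε hε).toRingHom

lemma smul_def (ε : kk) (hε : ε * ε = 1) (a : A) (x : M ε hε) :
    a • x = phi ε hε a * x := rfl

lemma alg_smul (ε : kk) (hε : ε * ε = 1) (c : kk) (x : M ε hε) :
    algebraMap kk A c • x = c * x := by
  rw [smul_def, AlgHom.commutes, Algebra.algebraMap_self_apply]

lemma of_smul (ε : kk) (hε : ε * ε = 1) (g : G) (x : M ε hε) :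
    (MonoidAlgebra.of kk G g) • x = chi ε hε g * x := by
  rw [smul_def, phi, MonoidAlgebra.lift_of]


lemma Msimple (ε : kk) (hε : ε * ε = 1) : IsSimpleModule A (M ε hε) := by
  rw [isSimpleModule_iff]
  constructor
  intro W
  rcases eq_or_ne W ⊥ with h | h
  · exact Or.inl h
  · right
    obtain ⟨x, hxW, hx0⟩ := Submodule.ne_bot_iff W |>.mp h
    rw [eq_top_iff]
    intro y _
    have : y = algebraMap kk A (y * x⁻¹) • x := by
      rw [alg_smul, mul_assoc, inv_mul_cancel₀ hx0, mul_one]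
    rw [this]
    exact W.smul_mem _ hxW

lemma no_iso (ε₁ : kk) (hε₁ : ε₁ * ε₁ = 1) (ε₂ : kk) (hε₂ : ε₂ * ε₂ = 1)
    (hne : ε₁ ≠ ε₂) : IsEmpty ((M ε₁ hε₁) ≃ₗ[A] (M ε₂ hε₂)) := by
  constructor
  intro e
  have h1 := e.map_smul (MonoidAlgebra.of kk G (DihedralGroup.sr 0)) 1
  rw [of_smul, of_smul] at h1
  have h2 : chi ε₁ hε₁ (DihedralGroup.sr 0) = ε₁ := rfl
  have h3 : chi ε₂ hε₂ (DihedralGroup.sr 0) = ε₂ := rfl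
  rw [h2, h3, mul_one] at h1
  -- h1 : e ε₁ = ε₂ * e 1
  have h4 : e (ε₁ : M ε₁ hε₁) = ε₁ * e 1 := by
    have := e.map_smul (algebraMap kk A ε₁) 1
    rw [alg_smul, alg_smul, mul_one] at this
    exact this
  have h5 : (ε₁ - ε₂) * e 1 = 0 := by
    rw [sub_mul, ← h4, h1, sub_self]
  have h6 : (e 1 : M ε₂ hε₂) ≠ 0 := by
    intro h
    have := e.injective (h.trans (e.map_zero).symm)
    simp at this
  rcases mul_eq_zero.mp h5 with h | h
  · exact hne (sub_eq_zero.mp h)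
  · exact h6 h

lemma frank (ε : kk) (hε : ε * ε = 1) :
    Module.finrank kk (RestrictScalars kk A (M ε hε)) = 1 := by
  let E : RestrictScalars kk A (M ε hε) ≃ₗ[kk] kk :=
    { RestrictScalars.addEquiv kk A (M ε hε) with
      map_smul' := by
        intro c x
        simp only [RingHom.id_apply]
        show RestrictScalars.addEquiv kk A (M ε hε) (c • x)
          = c • RestrictScalars.addEquiv kk A (M ε hε) x
        rw [RestrictScalars.addEquiv_map_smul, alg_smul]
        rfl }
  rw [E.finrank_eq, Module.finrank_self]


lemma hone : (1 : kk) * 1 = 1 := by decide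
lemma hmone : (-1 : kk) * (-1 : kk) = 1 := by decide

section Classify

variable {N : Type} [AddCommGroup N] [Module A N]

local notation "og" => MonoidAlgebra.of kk G

/-- The submodule of vectors fixed by all rotations. -/
def Kfix : Submodule A N where
  carrier := {x | ∀ j : ZMod 5, og (DihedralGroup.r j) • x = x}
  add_mem' := by
    intro a b ha hb j
    rw [smul_add, ha j, hb j]
  zero_mem' := by
    intro j
    rw [smul_zero]
  smul_mem' := by
    intro a x hx
    induction a using MonoidAlgebra.induction_on with
    | of g =>
      intro j
      rcases g with i | i
      · show og (DihedralGroup.r j) • (og (DihedralGroup.r i) • x) = og (DihedralGroup.r i) • x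
        rw [← mul_smul, ← map_mul, DihedralGroup.r_mul_r, hx, hx]
      · show og (DihedralGroup.r j) • (og (DihedralGroup.sr i) • x) = og (DihedralGroup.sr i) • x
        rw [← mul_smul, ← map_mul, DihedralGroup.r_mul_sr,
          show (DihedralGroup.sr (i - j) : G) = DihedralGroup.sr i * DihedralGroup.r (-j) by
            rw [DihedralGroup.sr_mul_r, ← sub_eq_add_neg],
          map_mul, mul_smul, hx]
    | add f g hf hg =>
      intro j
      rw [add_smul, smul_add, hf j, hg j]
    | smul c f hf =>
      intro j
      rw [Algebra.smul_def, mul_smul, ← mul_smul, ← Algebra.commutes c, mul_smul, hf j]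

lemma mem_Kfix (x : N) : x ∈ (Kfix : Submodule A N) ↔
    ∀ j : ZMod 5, og (DihedralGroup.r j) • x = x := Iff.rfl

lemma r_trivial (hs : IsSimpleModule A N) :
    ∀ (j : ZMod 5) (x : N), (og (DihedralGroup.r j)) • x = x := by
  classical
  haveI := hs
  haveI : Nontrivial N := IsSimpleModule.nontrivial A N
  set u : A := og (DihedralGroup.r 1) - 1 with hu
  have hchar : CharP A 5 := charP_of_injective_algebraMap' kk (A := A) 5
  haveI := hchar
  have h5 : (og (DihedralGroup.r 1) : A) ^ 5 = 1 := by
    rw [← map_pow, DihedralGroup.r_one_pow, show ((5 : ℕ) : ZMod 5) = 0 by decide,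
      ← DihedralGroup.one_def, map_one]
  have hu5 : u ^ 5 = 0 := by
    have hc : Commute (og (DihedralGroup.r 1) : A) (1 : A) := Commute.one_right _
    rw [hu, sub_pow_char_of_commute _ hc, h5, one_pow, sub_self]
  obtain ⟨y, hy⟩ := exists_ne (0 : N)
  have hP : ∃ m, u ^ m • y = 0 := ⟨5, by rw [hu5, zero_smul]⟩
  set n := Nat.find hP with hndef
  have hn : u ^ n • y = 0 := Nat.find_spec hP
  have hn0 : n ≠ 0 := by
    intro h
    rw [h, pow_zero, one_smul] at hn
    exact hy hn
  have hx0 : u ^ (n - 1) • y ≠ 0 := Nat.find_min hP (by omega)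
  set x := u ^ (n - 1) • y with hxdef
  have hux : u • x = 0 := by
    rw [hxdef, ← mul_smul, ← pow_succ', Nat.sub_add_cancel (Nat.one_le_iff_ne_zero.mpr hn0)]
    exact hn
  have hfix : og (DihedralGroup.r 1) • x = x := by
    rw [hu, sub_smul, one_smul, sub_eq_zero] at hux
    exact hux
  have hxK : x ∈ (Kfix : Submodule A N) := by
    rw [mem_Kfix]
    have key : ∀ m : ℕ, ((og (DihedralGroup.r 1) : A)) ^ m • x = x := by
      intro m
      induction m with
      | zero => rw [pow_zero, one_smul]
      | succ m ih => rw [pow_succ', mul_smul, ih, hfix]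
    intro j
    have hj : (DihedralGroup.r j : G) = DihedralGroup.r 1 ^ j.val := by
      rw [DihedralGroup.r_one_pow, ZMod.natCast_rightInverse j]
    rw [hj, map_pow, key]
  have hK : (Kfix : Submodule A N) = ⊤ := by
    rcases IsSimpleOrder.eq_bot_or_eq_top (Kfix : Submodule A N) with h | h
    · rw [h, Submodule.mem_bot] at hxK
      exact absurd hxK hx0
    · exact h
  intro j x'
  have : x' ∈ (Kfix : Submodule A N) := by rw [hK]; trivial
  exact (mem_Kfix x').mp this j


/-- The eigenspace of the reflection with eigenvalue ε, given that rotations act trivially. -/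
def Kchar (ε : kk) (hε : ε * ε = 1)
    (hr : ∀ (j : ZMod 5) (x : N), (og (DihedralGroup.r j)) • x = x) : Submodule A N where
  carrier := {x | og (DihedralGroup.sr 0) • x = algebraMap kk A ε • x}
  add_mem' := by
    intro a b ha hb
    simp only [Set.mem_setOf_eq] at *
    rw [smul_add, smul_add, ha, hb]
  zero_mem' := by simp
  smul_mem' := by
    have hsr : ∀ (i : ZMod 5) (x : N),
        og (DihedralGroup.sr i) • x = og (DihedralGroup.sr 0) • x := by
      intro i x
      rw [show (DihedralGroup.sr i : G) = DihedralGroup.sr 0 * DihedralGroup.r i by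
        rw [DihedralGroup.sr_mul_r, zero_add], map_mul, mul_smul, hr]
    have hinv : ∀ x : N, og (DihedralGroup.sr 0) • (og (DihedralGroup.sr 0) • x) = x := by
      intro x
      rw [← mul_smul, ← map_mul, DihedralGroup.sr_mul_sr, sub_self, ← DihedralGroup.one_def,
        map_one, one_smul]
    intro a x hx
    simp only [Set.mem_setOf_eq] at *
    induction a using MonoidAlgebra.induction_on with
    | of g =>
      rcases g with i | i
      · rw [hr, hx]
      · rw [hsr i x, hinv, hx, ← mul_smul, ← map_mul, hε, map_one, one_smul]
    | add f g hf hg =>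
      rw [add_smul, smul_add, smul_add, hf, hg]
    | smul c f hf =>
      calc og (DihedralGroup.sr 0) • ((c • f) • x)
          = og (DihedralGroup.sr 0) • (algebraMap kk A c • (f • x)) := by
            rw [Algebra.smul_def, mul_smul]
        _ = algebraMap kk A c • (og (DihedralGroup.sr 0) • (f • x)) := by
            rw [← mul_smul, ← Algebra.commutes c, mul_smul]
        _ = algebraMap kk A c • (algebraMap kk A ε • (f • x)) := by rw [hf]
        _ = algebraMap kk A ε • (algebraMap kk A c • (f • x)) := by
            rw [← mul_smul, ← map_mul, mul_comm c ε, map_mul, mul_smul]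
        _ = algebraMap kk A ε • ((c • f) • x) := by rw [Algebra.smul_def, mul_smul]

lemma mem_Kchar (ε : kk) (hε : ε * ε = 1)
    (hr : ∀ (j : ZMod 5) (x : N), (og (DihedralGroup.r j)) • x = x) (x : N) :
    x ∈ Kchar ε hε hr ↔ og (DihedralGroup.sr 0) • x = algebraMap kk A ε • x := Iff.rfl

lemma equiv_of_char (ε : kk) (hε : ε * ε = 1) (hs : IsSimpleModule A N)
    (h : ∀ (g : G) (x : N), og g • x = algebraMap kk A (chi ε hε g) • x) :
    Nonempty (N ≃ₗ[A] M ε hε) := by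
  haveI := hs
  haveI : Nontrivial N := IsSimpleModule.nontrivial A N
  have hall : ∀ (a : A) (x : N), a • x = algebraMap kk A (phi ε hε a) • x := by
    intro a x
    induction a using MonoidAlgebra.induction_on with
    | of g => rw [h, phi, MonoidAlgebra.lift_of]
    | add f g hf hg =>
      rw [add_smul, hf, hg, map_add (phi ε hε) f g, map_add, add_smul]
    | smul c f hf =>
      rw [Algebra.smul_def, map_mul (phi ε hε), AlgHom.commutes, mul_smul, hf, ← mul_smul,
        ← map_mul, Algebra.algebraMap_self_apply]
  obtain ⟨x0, hx0⟩ := exists_ne (0 : N)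
  let f : M ε hε →ₗ[A] N :=
    { toFun := fun m => algebraMap kk A m • x0
      map_add' := by
        intro m₁ m₂
        show algebraMap kk A (m₁ + m₂) • x0
          = algebraMap kk A m₁ • x0 + algebraMap kk A m₂ • x0
        rw [map_add, add_smul]
      map_smul' := by
        intro a m
        show algebraMap kk A (a • m) • x0 = a • (algebraMap kk A m • x0)
        rw [smul_def, map_mul, mul_smul, ← hall] }
  have hfapp : ∀ m : M ε hε, f m = algebraMap kk A m • x0 := fun _ => rfl
  have hker : ∀ m : M ε hε, f m = 0 → m = 0 := by
    intro m hm
    rw [hfapp] at hm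
    by_contra hm0
    apply hx0
    calc x0 = algebraMap kk A (1 : kk) • x0 := by rw [map_one, one_smul]
      _ = algebraMap kk A (m⁻¹ * m) • x0 := by rw [inv_mul_cancel₀ hm0]
      _ = algebraMap kk A m⁻¹ • (algebraMap kk A m • x0) := by rw [map_mul, mul_smul]
      _ = 0 := by rw [hm, smul_zero]
  have hinj : Function.Injective f := by
    intro a b hab
    have := hker (a - b) (by rw [map_sub, hab, sub_self])
    exact sub_eq_zero.mp this
  have hsurj : Function.Surjective f := by
    rw [← LinearMap.range_eq_top]
    rcases IsSimpleOrder.eq_bot_or_eq_top (LinearMap.range f) with hb | ht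
    · exfalso
      have hf1 : f 1 = x0 := by rw [hfapp, map_one, one_smul]
      have : f 1 ∈ LinearMap.range f := ⟨1, rfl⟩
      rw [hb, Submodule.mem_bot, hf1] at this
      exact hx0 this
    · exact ht
  exact ⟨(LinearEquiv.ofBijective f ⟨hinj, hsurj⟩).symm⟩

lemma classify (hs : IsSimpleModule A N) :
    Nonempty (N ≃ₗ[A] M 1 hone) ∨ Nonempty (N ≃ₗ[A] M (-1) hmone) := by
  haveI := hs
  haveI : Nontrivial N := IsSimpleModule.nontrivial A N
  have hr := r_trivial hs
  have hsr : ∀ (i : ZMod 5) (x : N),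
      og (DihedralGroup.sr i) • x = og (DihedralGroup.sr 0) • x := by
    intro i x
    rw [show (DihedralGroup.sr i : G) = DihedralGroup.sr 0 * DihedralGroup.r i by
      rw [DihedralGroup.sr_mul_r, zero_add], map_mul, mul_smul, hr]
  have hinv : ∀ x : N, og (DihedralGroup.sr 0) • (og (DihedralGroup.sr 0) • x) = x := by
    intro x
    rw [← mul_smul, ← map_mul, DihedralGroup.sr_mul_sr, sub_self, ← DihedralGroup.one_def,
      map_one, one_smul]
  have hcomm : ∀ (c : kk) (w : N), og (DihedralGroup.sr 0) • (algebraMap kk A c • w)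
      = algebraMap kk A c • (og (DihedralGroup.sr 0) • w) := by
    intro c w
    rw [← mul_smul, ← Algebra.commutes, mul_smul]
  obtain ⟨x0, hx0⟩ := exists_ne (0 : N)
  have hy : (algebraMap kk A 3 • (x0 + og (DihedralGroup.sr 0) • x0)) ∈ Kchar 1 hone hr := by
    rw [mem_Kchar, map_one, one_smul, hcomm, smul_add, hinv x0, add_comm]
  have hz : (algebraMap kk A 3 • (x0 - og (DihedralGroup.sr 0) • x0))
      ∈ Kchar (-1) hmone hr := by
    rw [mem_Kchar, hcomm, smul_sub, hinv x0, ← neg_sub, smul_neg,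
      show (algebraMap kk A (-1 : kk)) = -1 by rw [map_neg, map_one], neg_one_smul]
  have hcase : (Kchar 1 hone hr = ⊤) ∨ (Kchar (-1) hmone hr = ⊤) := by
    by_contra hcon
    push_neg at hcon
    have h1 := (IsSimpleOrder.eq_bot_or_eq_top (Kchar 1 hone hr)).resolve_right hcon.1
    have h2 := (IsSimpleOrder.eq_bot_or_eq_top (Kchar (-1) hmone hr)).resolve_right hcon.2
    rw [h1, Submodule.mem_bot] at hy
    rw [h2, Submodule.mem_bot] at hz
    apply hx0
    have hsplit : x0 = algebraMap kk A 3 • (x0 + og (DihedralGroup.sr 0) • x0)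
        + algebraMap kk A 3 • (x0 - og (DihedralGroup.sr 0) • x0) := by
      rw [← smul_add,
        show (x0 + og (DihedralGroup.sr 0) • x0) + (x0 - og (DihedralGroup.sr 0) • x0)
          = x0 + x0 by abel,
        smul_add, ← add_smul, ← map_add, show (3 : kk) + 3 = 1 by decide, map_one, one_smul]
    rw [hsplit, hy, hz, add_zero]
  rcases hcase with h | h
  · left
    apply equiv_of_char 1 hone hs
    intro g x
    have hx : og (DihedralGroup.sr 0) • x = algebraMap kk A 1 • x :=
      (mem_Kchar 1 hone hr x).mp (by rw [h]; trivial)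
    rcases g with i | i
    · rw [hr, show chi 1 hone (DihedralGroup.r i) = 1 from rfl, map_one, one_smul]
    · rw [hsr, hx, show chi 1 hone (DihedralGroup.sr i) = 1 from rfl]
  · right
    apply equiv_of_char (-1) hmone hs
    intro g x
    have hx : og (DihedralGroup.sr 0) • x = algebraMap kk A (-1) • x :=
      (mem_Kchar (-1) hmone hr x).mp (by rw [h]; trivial)
    rcases g with i | i
    · rw [hr, show chi (-1) hmone (DihedralGroup.r i) = 1 from rfl, map_one, one_smul]
    · rw [hsr, hx, show chi (-1) hmone (DihedralGroup.sr i) = -1 from rfl]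

end Classify

end D10Aux

/-- The group algebra 𝔽₅[D₁₀] has exactly two isomorphism classes of simple modules,
both of dimension 1. -/
theorem two_simple_modules_D10 :
    ∃ T : Fin 2 → ModuleCat.{0} (MonoidAlgebra (ZMod 5) (DihedralGroup 5)),
      (∀ i, IsSimpleModule (MonoidAlgebra (ZMod 5) (DihedralGroup 5)) (T i)) ∧
      (∀ i j, i ≠ j → IsEmpty ((T i)
        ≃ₗ[MonoidAlgebra (ZMod 5) (DihedralGroup 5)] (T j))) ∧
      (∀ (N : Type) [AddCommGroup N]
          [Module (MonoidAlgebra (ZMod 5) (DihedralGroup 5)) N],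
        IsSimpleModule (MonoidAlgebra (ZMod 5) (DihedralGroup 5)) N →
          ∃ i, Nonempty (N ≃ₗ[MonoidAlgebra (ZMod 5) (DihedralGroup 5)] (T i))) ∧
      (∀ i, Module.finrank (ZMod 5)
          (RestrictScalars (ZMod 5)
            (MonoidAlgebra (ZMod 5) (DihedralGroup 5)) (T i)) = 1) := by
  classical
  refine ⟨![ModuleCat.of D10Aux.A (D10Aux.M 1 D10Aux.hone),
            ModuleCat.of D10Aux.A (D10Aux.M (-1) D10Aux.hmone)], ?_, ?_, ?_, ?_⟩
  · intro i
    fin_cases i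
    · exact D10Aux.Msimple 1 D10Aux.hone
    · exact D10Aux.Msimple (-1) D10Aux.hmone
  · intro i j hij
    fin_cases i <;> fin_cases j <;>
      first
        | exact absurd rfl hij
        | exact D10Aux.no_iso _ _ _ _ (by decide)
  · intro N _ _ hN
    rcases D10Aux.classify hN with e | e
    · exact ⟨0, e⟩
    · exact ⟨1, e⟩
  · intro i
    fin_cases i
    · exact D10Aux.frank 1 D10Aux.hone
    · exact D10Aux.frank (-1) D10Aux.hmone
end
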